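/- Let I be a monomial ideal of A with M(I) finite, and let V_1,…,V_m be pairwise disjoint nonempty sets of indices whose union is the set of surviving variables {i : e_i ∈ M(I)}. Then the following are equivalent: (i) X_i·X_j ∈ I whenever i and j lie in different parts V_s ≠ V_t; (ii) every vertex a ∈ M(I) has its support supp(a) = {i : a_i > 0} contained in a single part, and two vertices whose supports lie in different parts are never reachable from one another in G(I). (This is the correspondence between such partitions of the variables and the decomposition of the survival complex into m nontrivial or quasi-trivially connected components.) -/

import Mathlib

open MvPolynomial

/-- An ideal of `k[X_1,…,X_n]` is a *monomial ideal* if it is generated by a set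
of monomials. -/
def IsMonomialIdeal {k : Type*} [Field k] {n : ℕ}
    (I : Ideal (MvPolynomial (Fin n) k)) : Prop :=
  ∃ S : Set ((Fin n) →₀ ℕ),
    I = Ideal.span ((fun a => (monomial a (1 : k) : MvPolynomial (Fin n) k)) '' S)

/-- `M(I)`: the vertices of the survival complex of `A/I`. -/
def survivors {k : Type*} [Field k] {n : ℕ}
    (I : Ideal (MvPolynomial (Fin n) k)) : Set ((Fin n) →₀ ℕ) :=
  {a | a ≠ 0 ∧ monomial a (1 : k) ∉ I}

/-- The survival graph `G(I)`: distinct vertices `a, b ∈ M(I)` are adjacent iff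
`X^{a+b} ∉ I` (the 1-skeleton of the survival complex). -/
def survGraph {k : Type*} [Field k] {n : ℕ}
    (I : Ideal (MvPolynomial (Fin n) k)) : SimpleGraph ((Fin n) →₀ ℕ) where
  Adj a b := a ≠ b ∧ a ∈ survivors I ∧ b ∈ survivors I ∧ monomial (a + b) (1 : k) ∉ I
  symm := by
    constructor
    rintro a b ⟨h1, h2, h3, h4⟩
    exact ⟨h1.symm, h3, h2, by rwa [add_comm]⟩
  loopless := by
    constructor
    rintro a ⟨h1, -⟩
    exact h1 rfl

lemma exists_pos' {n : ℕ} {a : Fin n →₀ ℕ} (h : a ≠ 0) : ∃ i, 0 < a i := by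
  by_contra hc
  push_neg at hc
  exact h (by ext i; have := hc i; simp; omega)

lemma habs_lemma {k : Type*} [Field k] {n : ℕ} (I : Ideal (MvPolynomial (Fin n) k))
    (b c : Fin n →₀ ℕ) (h : monomial b (1 : k) ∈ I) : monomial (b + c) (1 : k) ∈ I := by
  have := Ideal.mul_mem_right (monomial c (1 : k)) I h
  rwa [monomial_mul, mul_one] at this

/-- The survival complex splits into components along a partition
`V_1,…,V_m` of the surviving variables if and only if the ideal contains all
pairwise products of variables from distinct parts. -/
theorem components_iff_pairwise_products
    {k : Type*} [Field k] {n m : ℕ} (hn : 1 ≤ n)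
    (I : Ideal (MvPolynomial (Fin n) k)) (hI : IsMonomialIdeal I)
    (hfin : (survivors I).Finite)
    (V : Fin m → Set (Fin n))
    (hVne : ∀ t, (V t).Nonempty)
    (hVdisj : ∀ s t : Fin m, s ≠ t → Disjoint (V s) (V t))
    (hVcover : (⋃ t, V t) = {i : Fin n | Finsupp.single i 1 ∈ survivors I}) :
    (∀ s t : Fin m, s ≠ t → ∀ i ∈ V s, ∀ j ∈ V t,
        (X i : MvPolynomial (Fin n) k) * X j ∈ I) ↔
      ((∀ a ∈ survivors I, ∃ s : Fin m, ∀ i : Fin n, 0 < a i → i ∈ V s) ∧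
        ∀ a ∈ survivors I, ∀ b ∈ survivors I, ∀ s t : Fin m, s ≠ t →
          (∀ i : Fin n, 0 < a i → i ∈ V s) → (∀ j : Fin n, 0 < b j → j ∈ V t) →
            ¬ (survGraph I).Reachable a b) := by
  constructor
  · intro h
    -- first part: supports lie in one part
    have hsupp : ∀ a ∈ survivors I, ∃ s : Fin m, ∀ i : Fin n, 0 < a i → i ∈ V s := by
      intro a ha
      obtain ⟨hane, haI⟩ := ha
      obtain ⟨i₀, hi₀⟩ : ∃ i, 0 < a i := exists_pos' (by
        first
          | exact hane
          | exact ha.1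
          | exact hb.1)
      have hvar : ∀ i, 0 < a i → i ∈ ⋃ t, V t := by
        intro i hi
        rw [hVcover]
        refine ⟨(by simp : (Finsupp.single i 1 : Fin n →₀ ℕ) ≠ 0), fun hmem => haI ?_⟩
        have hdecomp : a = Finsupp.single i 1 + (a - Finsupp.single i 1) := by
          ext x
          rcases eq_or_ne x i with rfl | hxi
          · simp; omega
          · simp [Finsupp.single_apply, Ne.symm hxi]
        rw [hdecomp]
        exact habs_lemma I _ _ hmem
      obtain ⟨s, hs⟩ := Set.mem_iUnion.mp (hvar i₀ hi₀)
      refine ⟨s, fun i hi => ?_⟩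
      obtain ⟨t, ht⟩ := Set.mem_iUnion.mp (hvar i hi)
      rcases eq_or_ne t s with rfl | hts
      · exact ht
      · exfalso
        have hij : i ≠ i₀ := fun hij => (Set.disjoint_left.mp (hVdisj t s hts) ht) (hij ▸ hs)
        have hmem : (X i : MvPolynomial (Fin n) k) * X i₀ ∈ I := h t s hts i ht i₀ hs
        rw [X, X, monomial_mul, mul_one] at hmem
        have hdecomp : a = (Finsupp.single i 1 + Finsupp.single i₀ 1)
            + (a - Finsupp.single i 1 - Finsupp.single i₀ 1) := by
          ext x
          rcases eq_or_ne x i with rfl | hxi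
          · simp [Finsupp.single_apply, Ne.symm hij]; omega
          · rcases eq_or_ne x i₀ with rfl | hxi0
            · simp [Finsupp.single_apply, hij]; omega
            · simp [Finsupp.single_apply, Ne.symm hxi, Ne.symm hxi0]
        exact haI (hdecomp ▸ habs_lemma I _ _ hmem)
    refine ⟨hsupp, ?_⟩
    -- adjacency preserves part
    have hadj : ∀ a b : (Fin n) →₀ ℕ, (survGraph I).Adj a b → ∀ s t : Fin m,
        (∀ i, 0 < a i → i ∈ V s) → (∀ j, 0 < b j → j ∈ V t) → s = t := by
      intro a b hab s t has hbt
      obtain ⟨hne, ha, hb, habI⟩ := hab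
      have hab_surv : a + b ∈ survivors I := by
        refine ⟨fun h0 => ha.1 ?_, habI⟩
        ext x
        have := congrArg (fun f => f x) h0
        simp at this
        simp [this.1, this.2]
      obtain ⟨u, hu⟩ := hsupp _ hab_surv
      obtain ⟨ia, hia⟩ : ∃ i, 0 < a i := exists_pos' (by
        first
          | exact hane
          | exact ha.1
          | exact hb.1)
      obtain ⟨ib, hib⟩ : ∃ i, 0 < b i := exists_pos' (by
        first
          | exact hane
          | exact ha.1
          | exact hb.1)
      have hsu : s = u := by
        by_contra hsu
        exact Set.disjoint_left.mp (hVdisj s u hsu) (has ia hia)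
          (hu ia (by have := Finsupp.add_apply a b ia; omega))
      have htu : t = u := by
        by_contra htu
        exact Set.disjoint_left.mp (hVdisj t u htu) (hbt ib hib)
          (hu ib (by have := Finsupp.add_apply a b ib; omega))
      rw [hsu, htu]
    have key : ∀ (a b : (Fin n) →₀ ℕ), (survGraph I).Walk a b →
        a ∈ survivors I → ∀ s t : Fin m,
        (∀ i, 0 < a i → i ∈ V s) → (∀ j, 0 < b j → j ∈ V t) → s = t := by
      intro a b w
      induction w with
      | nil =>
        intro ha s t has hat
        obtain ⟨ia, hia⟩ := exists_pos' ha.1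
        by_contra hst
        exact Set.disjoint_left.mp (hVdisj s t hst) (has ia hia) (hat ia hia)
      | @cons a c b hadj' w ih =>
        intro ha s t has hbt
        have hcS : c ∈ survivors I := hadj'.2.2.1
        obtain ⟨u, hu⟩ := hsupp c hcS
        have h1 : s = u := hadj a c hadj' s u has hu
        rw [h1]
        exact ih hcS u t hu hbt
    intro a ha b hb s t hst has hbt hre
    obtain ⟨w⟩ := hre
    exact hst (key a b w ha s t has hbt)
  · rintro ⟨h1, h2⟩ s t hst i hi j hj
    by_contra hc
    have hij : i ≠ j := fun hij => Set.disjoint_left.mp (hVdisj s t hst) hi (hij ▸ hj)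
    have hiS : Finsupp.single i 1 ∈ survivors I := by
      have : i ∈ ⋃ t, V t := Set.mem_iUnion.mpr ⟨s, hi⟩
      rwa [hVcover] at this
    have hjS : Finsupp.single j 1 ∈ survivors I := by
      have : j ∈ ⋃ t, V t := Set.mem_iUnion.mpr ⟨t, hj⟩
      rwa [hVcover] at this
    have hmono : monomial (Finsupp.single i 1 + Finsupp.single j 1) (1 : k) ∉ I := by
      rwa [X, X, monomial_mul, mul_one] at hc
    have hadj : (survGraph I).Adj (Finsupp.single i 1) (Finsupp.single j 1) := by
      refine ⟨fun heq => hij ?_, hiS, hjS, hmono⟩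
      have := congrArg (fun f => f i) heq
      simp [Finsupp.single_apply] at this
      exact this.symm
    refine h2 _ hiS _ hjS s t hst ?_ ?_ hadj.reachable
    · intro x hx
      rcases eq_or_ne x i with rfl | hxi
      · exact hi
      · simp [Finsupp.single_apply, Ne.symm hxi] at hx
    · intro x hx
      rcases eq_or_ne x j with rfl | hxj
      · exact hj
      · simp [Finsupp.single_apply, Ne.symm hxj] at hx
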